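/- The function f : ℝ → ℝ defined by f(x) = π/4 + arcsin(√(x/(4·(x−1))))/√x − (1/2)·arctan(√(3x−4)/(x−2)) is strictly increasing on the interval [16, ∞). -/

import Mathlib

open Real

lemma arctan_le_self' {x : ℝ} (hx : 0 ≤ x) : Real.arctan x ≤ x := by
  have h1 : 0 ≤ Real.arctan x := by simpa using Real.arctan_strictMono.monotone hx
  have h2 : Real.arctan x < Real.pi / 2 := Real.arctan_lt_pi_div_two x
  have := Real.le_tan h1 h2
  rwa [Real.tan_arctan] at this

lemma alg_aux (x s t w a : ℝ) (hs : 0 < s) (ht : 0 < t) (hw : 0 < w)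
    (hx2 : (0:ℝ) < x - 2) (hx1 : (0:ℝ) < x - 1) (hx0 : (0:ℝ) < x)
    (hs2 : s ^ 2 = x) (ht2 : t ^ 2 = x - 1) (hw2 : w ^ 2 = 3 * x - 4) :
    w / (4 * x * (x - 1)) - a / (2 * s * x) =
    0 +
        (1 / (w / (2 * t)) * (1 / (2 * (s / (2 * t))) * (-1 / (4 * (x - 1) ^ 2))) * s -
            a * (1 / (2 * s))) / s ^ 2 -
      1 / 2 *
        (1 / (x * (x - 1) / (x - 2) ^ 2) *
          ((1 / (2 * w) * 3 * (x - 2) - w * 1) / (x - 2) ^ 2)) := by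
  subst hs2
  rw [← ht2]
  have hww : w = (3 * s ^ 2 - 4) / w := by rw [eq_div_iff hw.ne', ← hw2]; ring
  nth_rewrite 1 [hww]
  have hs2' : s ^ 2 - 2 ≠ 0 := by nlinarith
  field_simp
  linear_combination (-8 * s) * hw2

lemma deriv_lemma {x : ℝ} (hx : 16 < x) :
    HasDerivAt (fun x : ℝ =>
        Real.pi / 4 + Real.arcsin (Real.sqrt (x / (4 * (x - 1)))) / Real.sqrt x -
          (1 / 2) * Real.arctan (Real.sqrt (3 * x - 4) / (x - 2)))
      (Real.sqrt (3 * x - 4) / (4 * x * (x - 1)) -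
        Real.arcsin (Real.sqrt x / (2 * Real.sqrt (x - 1))) / (2 * Real.sqrt x * x)) x := by
  have hx0 : (0:ℝ) < x := by linarith
  have hx1 : (0:ℝ) < x - 1 := by linarith
  have hx2 : (0:ℝ) < x - 2 := by linarith
  have hx34 : (0:ℝ) < 3 * x - 4 := by linarith
  have hs : 0 < Real.sqrt x := Real.sqrt_pos.2 hx0
  have ht : 0 < Real.sqrt (x - 1) := Real.sqrt_pos.2 hx1
  have hw : 0 < Real.sqrt (3 * x - 4) := Real.sqrt_pos.2 hx34
  have hs2 : Real.sqrt x ^ 2 = x := Real.sq_sqrt hx0.le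
  have ht2 : Real.sqrt (x - 1) ^ 2 = x - 1 := Real.sq_sqrt hx1.le
  have hw2 : Real.sqrt (3 * x - 4) ^ 2 = 3 * x - 4 := Real.sq_sqrt hx34.le
  have hr0 : 0 < x / (4 * (x - 1)) := by positivity
  have hr1 : x / (4 * (x - 1)) < 1 := by
    rw [div_lt_one (by positivity)]; linarith
  have hsr : Real.sqrt (x / (4 * (x - 1))) = Real.sqrt x / (2 * Real.sqrt (x - 1)) := by
    rw [show x / (4 * (x - 1)) = (Real.sqrt x / (2 * Real.sqrt (x - 1))) ^ 2 by
      rw [div_pow, mul_pow, hs2, ht2]; norm_num]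
    exact Real.sqrt_sq (by positivity)
  have h1r : Real.sqrt (1 - x / (4 * (x - 1))) =
      Real.sqrt (3 * x - 4) / (2 * Real.sqrt (x - 1)) := by
    rw [show 1 - x / (4 * (x - 1)) = (Real.sqrt (3 * x - 4) / (2 * Real.sqrt (x - 1))) ^ 2 by
      rw [div_pow, mul_pow, hw2, ht2]; field_simp; ring]
    exact Real.sqrt_sq (by positivity)
  have hlt1 : Real.sqrt (x / (4 * (x - 1))) < 1 := by
    rw [Real.sqrt_lt' one_pos]; nlinarith
  -- inner rational function derivative
  have d_inner : HasDerivAt (fun y : ℝ => y / (4 * (y - 1))) (-1 / (4 * (x - 1) ^ 2)) x := by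
    have h := (hasDerivAt_id x).div (((hasDerivAt_id x).sub_const 1).const_mul 4)
      (by positivity)
    refine h.congr_deriv (Eq.symm ?_)
    simp only [id]
    field_simp
    ring
  have d_sqrt_inner := (Real.hasDerivAt_sqrt hr0.ne').comp x d_inner
  have d_arcsin := (Real.hasDerivAt_arcsin (by nlinarith [Real.sqrt_nonneg (x / (4 * (x - 1)))]) hlt1.ne).comp x d_sqrt_inner
  have d_sqrtx : HasDerivAt Real.sqrt (1 / (2 * Real.sqrt x)) x := Real.hasDerivAt_sqrt hx0.ne'
  have d_quot := d_arcsin.div d_sqrtx hs.ne'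
  have d_lin : HasDerivAt (fun y : ℝ => 3 * y - 4) 3 x := by
    simpa using ((hasDerivAt_id x).const_mul 3).sub_const 4
  have d_sqrt3 := (Real.hasDerivAt_sqrt hx34.ne').comp x d_lin
  have d_den : HasDerivAt (fun y : ℝ => y - 2) 1 x := (hasDerivAt_id x).sub_const 2
  have d_h := d_sqrt3.div d_den hx2.ne'
  have d_atan := (Real.hasDerivAt_arctan (Real.sqrt (3 * x - 4) / (x - 2))).comp x d_h
  have final := ((hasDerivAt_const x (Real.pi / 4)).add d_quot).sub (d_atan.const_mul (1/2))
  refine final.congr_deriv (Eq.symm ?_)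
  have hden : 1 + (Real.sqrt (3 * x - 4) / (x - 2)) ^ 2 = x * (x - 1) / (x - 2) ^ 2 := by
    rw [div_pow, hw2]; field_simp; ring
  simp only [Function.comp_apply]
  rw [Real.sq_sqrt hr0.le, hsr, h1r, hden]
  exact alg_aux x _ _ _ _ hs ht hw hx2 hx1 hx0 hs2 ht2 hw2

lemma pos_lemma {x : ℝ} (hx : 16 < x) :
    0 < Real.sqrt (3 * x - 4) / (4 * x * (x - 1)) -
        Real.arcsin (Real.sqrt x / (2 * Real.sqrt (x - 1))) / (2 * Real.sqrt x * x) := by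
  have hx0 : (0:ℝ) < x := by linarith
  have hx1 : (0:ℝ) < x - 1 := by linarith
  have hx34 : (0:ℝ) < 3 * x - 4 := by linarith
  have hs : 0 < Real.sqrt x := Real.sqrt_pos.2 hx0
  have ht : 0 < Real.sqrt (x - 1) := Real.sqrt_pos.2 hx1
  have hw : 0 < Real.sqrt (3 * x - 4) := Real.sqrt_pos.2 hx34
  have hs2 : Real.sqrt x ^ 2 = x := Real.sq_sqrt hx0.le
  have ht2 : Real.sqrt (x - 1) ^ 2 = x - 1 := Real.sq_sqrt hx1.le
  have hw2 : Real.sqrt (3 * x - 4) ^ 2 = 3 * x - 4 := Real.sq_sqrt hx34.le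
  set s := Real.sqrt x
  set t := Real.sqrt (x - 1)
  set w := Real.sqrt (3 * x - 4)
  have hu1 : s / (2 * t) < 1 := by
    rw [div_lt_one (by positivity)]
    have : s < 2 * t ↔ x < (2 * t) ^ 2 := Real.sqrt_lt' (by positivity)
    rw [this]; nlinarith
  have hu0 : 0 < s / (2 * t) := by positivity
  have e1 : 1 - (s / (2 * t)) ^ 2 = (3 * x - 4) / (4 * (x - 1)) := by
    rw [div_pow, mul_pow, hs2, ht2]; field_simp; ring
  have e2 : Real.sqrt ((3 * x - 4) / (4 * (x - 1))) = w / (2 * t) := by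
    rw [show (3 * x - 4) / (4 * (x - 1)) = (w / (2 * t)) ^ 2 by
      rw [div_pow, mul_pow, hw2, ht2]; norm_num]
    exact Real.sqrt_sq (by positivity)
  have harc : Real.arcsin (s / (2 * t)) = Real.arctan (s / w) := by
    rw [Real.arcsin_eq_arctan ⟨by linarith, hu1⟩, e1, e2]
    congr 1
    field_simp
  have hbound : Real.arcsin (s / (2 * t)) ≤ s / w := by
    rw [harc]; exact arctan_le_self' (by positivity)
  have h2 : Real.arcsin (s / (2 * t)) / (2 * s * x) ≤ (s / w) / (2 * s * x) := by
    gcongr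
  have h3 : (s / w) / (2 * s * x) = 1 / (2 * w * x) := by
    field_simp
  have h4 : 1 / (2 * w * x) < w / (4 * x * (x - 1)) := by
    rw [div_lt_div_iff₀ (by positivity) (by positivity)]
    nlinarith
  rw [h3] at h2
  linarith

/-- Monotonicity claim used in the proof of Theorem 2 of the paper. -/
theorem stmt_15 :
    StrictMonoOn (fun x : ℝ =>
        Real.pi / 4 + Real.arcsin (Real.sqrt (x / (4 * (x - 1)))) / Real.sqrt x -
          (1 / 2) * Real.arctan (Real.sqrt (3 * x - 4) / (x - 2)))
      (Set.Ici (16 : ℝ)) := by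
  apply strictMonoOn_of_deriv_pos (convex_Ici 16)
  · have c1 : ContinuousOn (fun x : ℝ => x / (4 * (x - 1))) (Set.Ici 16) := by
      apply ContinuousOn.div continuousOn_id (by fun_prop)
      intro x hx
      simp only [Set.mem_Ici] at hx
      nlinarith
    have c2 : ContinuousOn (fun x : ℝ => Real.arcsin (Real.sqrt (x / (4 * (x - 1)))) /
        Real.sqrt x) (Set.Ici 16) := by
      apply ContinuousOn.div
        (Real.continuous_arcsin.comp_continuousOn (Real.continuous_sqrt.comp_continuousOn c1))
        (Real.continuous_sqrt.continuousOn)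
      intro x hx
      simp only [Set.mem_Ici] at hx
      exact (Real.sqrt_pos.2 (by linarith)).ne'
    have c3 : ContinuousOn (fun x : ℝ => Real.arctan (Real.sqrt (3 * x - 4) / (x - 2)))
        (Set.Ici 16) := by
      apply Real.continuous_arctan.comp_continuousOn
      apply ContinuousOn.div (by fun_prop) (by fun_prop)
      intro x hx
      simp only [Set.mem_Ici] at hx
      nlinarith
    exact (continuousOn_const.add c2).sub (continuousOn_const.mul c3)
  · intro x hx
    rw [interior_Ici, Set.mem_Ioi] at hx
    rw [(deriv_lemma hx).deriv]
    exact pos_lemma hx
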